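/- Let p > 1 be an integer and m a positive integer, and let k = min(p, m+1) ≥ 2. In the game N^m_{p, k-1} (Nim with m coins and p-index k-1), the position X = (p, p, ..., p, 0, ..., 0) with k-1 coordinates equal to p has no option (y^1, ..., y^m) with y^1 ⊕_p ⋯ ⊕_p y^m = 0. Consequently the p-saturation index of Nim with m coins is exactly min(p, m+1). -/

import Mathlib

/-- The `L`-th digit of `x` in base `p`. -/
def digit (p L x : ℕ) : ℕ := x / p ^ L % p

lemma digit_lt {p : ℕ} (hp : 1 < p) (L x : ℕ) : digit p L x < p := Nat.mod_lt _ (by omega)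

lemma digit_eq_zero {p L x : ℕ} (h : x < p ^ L) : digit p L x = 0 := by
  unfold digit; rw [Nat.div_eq_of_lt h]; rfl

lemma mod_pow_sum {p : ℕ} (x N : ℕ) : x % p ^ N = ∑ L ∈ Finset.range N, digit p L x * p ^ L := by
  induction N with
  | zero => simp [Nat.mod_one]
  | succ N ih =>
    rw [pow_succ, Nat.mod_mul, Finset.sum_range_succ, ih]
    unfold digit; ring

lemma sum_digits_lt {p : ℕ} (hp : 1 < p) (f : ℕ → ℕ) (hf : ∀ L, f L < p) (N : ℕ) :
    ∑ L ∈ Finset.range N, f L * p ^ L < p ^ N := by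
  induction N with
  | zero => simp
  | succ N ih =>
    rw [Finset.sum_range_succ, pow_succ]
    have := hf N
    nlinarith [pow_pos (show 0 < p by omega) N]

lemma digit_high {p : ℕ} (hp : 1 < p) {L K : ℕ} (hK : L + 1 ≤ K) (c r : ℕ) :
    digit p L (r + c * p ^ K) = digit p L r := by
  unfold digit
  have h1 : c * p ^ K = (c * p ^ (K - L - 1) * p) * p ^ L := by
    rw [mul_assoc, mul_assoc, ← pow_succ', ← pow_add]
    congr 2
    omega
  rw [h1, Nat.add_mul_div_right _ _ (pow_pos (by omega : 0 < p) L),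
    Nat.add_mul_mod_self_right]

lemma digit_of_sum {p : ℕ} (hp : 1 < p) (f : ℕ → ℕ) (hf : ∀ L, f L < p) (N L : ℕ) :
    digit p L (∑ L' ∈ Finset.range N, f L' * p ^ L') = if L < N then f L else 0 := by
  split
  · rename_i hL
    induction N with
    | zero => omega
    | succ N ih =>
      rcases Nat.lt_or_ge L N with h | h
      · rw [Finset.sum_range_succ, digit_high hp (by omega), ih h]
      · have hLN : L = N := by omega
        subst hLN
        rw [Finset.sum_range_succ]
        unfold digit
        have hlow : ∑ L' ∈ Finset.range L, f L' * p ^ L' < p ^ L := sum_digits_lt hp f hf L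
        rw [Nat.add_mul_div_right _ _ (pow_pos (by omega : 0 < p) L),
          Nat.div_eq_of_lt hlow, zero_add, Nat.mod_eq_of_lt (hf L)]
  · rename_i hL
    exact digit_eq_zero (lt_of_lt_of_le (sum_digits_lt hp f hf N)
      (Nat.pow_le_pow_right (by omega) (by omega)))

/-- `p`-ary addition without carry of a finite family: the `L`-th `p`-ary digit
is the sum of the `L`-th digits mod `p` (iterated `⊕_p`). -/
def oplusSum {ι : Type*} (p : ℕ) (s : Finset ι) (f : ι → ℕ) : ℕ :=
  ∑ L ∈ Finset.range (∑ i ∈ s, f i + 1), (∑ i ∈ s, digit p L (f i)) % p * p ^ L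

lemma le_sum_univ {m : ℕ} (Y : Fin m → ℕ) (i : Fin m) : Y i ≤ ∑ j, Y j :=
  Finset.single_le_sum (fun _ _ => Nat.zero_le _) (Finset.mem_univ i)

lemma digit_Y_zero {p m : ℕ} (hp : 1 < p) (Y : Fin m → ℕ) {L : ℕ} (hL : ∑ i, Y i + 1 ≤ L)
    (i : Fin m) : digit p L (Y i) = 0 := by
  apply digit_eq_zero
  calc Y i ≤ ∑ j, Y j := le_sum_univ Y i
    _ < p ^ (∑ j, Y j) := Nat.lt_pow_self hp
    _ ≤ p ^ L := Nat.pow_le_pow_right (by omega) (by omega)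

lemma oplus_digit {p m : ℕ} (hp : 1 < p) (Y : Fin m → ℕ) (L : ℕ) :
    digit p L (oplusSum p Finset.univ Y) = (∑ i, digit p L (Y i)) % p := by
  unfold oplusSum
  rw [digit_of_sum hp _ (fun L' => Nat.mod_lt _ (by omega)) _ L]
  split
  · rfl
  · rename_i h
    have : ∀ i : Fin m, digit p L (Y i) = 0 := digit_Y_zero hp Y (by omega)
    simp [this]

lemma oplus_eq_of_digits {p m : ℕ} (hp : 1 < p) (Y : Fin m → ℕ) (v : ℕ)
    (h : ∀ L, (∑ i, digit p L (Y i)) % p = digit p L v) : oplusSum p Finset.univ Y = v := by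
  set N := ∑ i, Y i + 1 with hN
  have hdig0 : ∀ L, N ≤ L → digit p L v = 0 := by
    intro L hL
    rw [← h L]
    have : ∀ i : Fin m, digit p L (Y i) = 0 := digit_Y_zero hp Y hL
    simp [this]
  have hvK : v < p ^ (N + v) :=
    lt_of_lt_of_le (Nat.lt_pow_self hp : v < p ^ v) (Nat.pow_le_pow_right (by omega) (by omega))
  have h1 : oplusSum p Finset.univ Y = ∑ L ∈ Finset.range N, digit p L v * p ^ L := by
    unfold oplusSum
    exact Finset.sum_congr rfl (fun L _ => by rw [h L])
  rw [h1]
  have h2 : ∑ L ∈ Finset.range N, digit p L v * p ^ L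
      = ∑ L ∈ Finset.range (N + v), digit p L v * p ^ L := by
    apply Finset.sum_subset (Finset.range_subset_range.2 (by omega))
    intro L _ hL
    rw [Finset.mem_range, not_lt] at hL
    rw [hdig0 L hL, zero_mul]
  rw [h2, ← mod_pow_sum, Nat.mod_eq_of_lt hvK]

lemma val_le_of_dvd {p n k : ℕ} (hp : 1 < p) (hn : n ≠ 0) (h : p ^ k ∣ n) :
    k ≤ padicValNat p n := by
  exact (Nat.pow_dvd_iff_le_padicValNat (by omega) hn).1 h

lemma val_eq {p n k : ℕ} (hp : 1 < p) (hn : n ≠ 0) (h1 : p ^ k ∣ n) (h2 : ¬ p ^ (k + 1) ∣ n) :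
    padicValNat p n = k := by
  refine le_antisymm ?_ (val_le_of_dvd hp hn h1)
  by_contra hlt
  exact h2 (dvd_trans (pow_dvd_pow p (by omega)) pow_padicValNat_dvd)

lemma decomp {p : ℕ} (x L : ℕ) :
    x = x / p ^ (L + 1) * p ^ (L + 1) + digit p L x * p ^ L + x % p ^ L := by
  have h1 : x % p ^ (L + 1) = x % p ^ L + p ^ L * digit p L x := by
    rw [pow_succ, Nat.mod_mul]; rfl
  have h2 := Nat.div_add_mod x (p ^ (L + 1))
  have h3 : x / p ^ (L + 1) * p ^ (L + 1) = p ^ (L + 1) * (x / p ^ (L + 1)) := Nat.mul_comm _ _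
  have h4 : digit p L x * p ^ L = p ^ L * digit p L x := Nat.mul_comm _ _
  omega

lemma digit_decompose {p : ℕ} (hp : 1 < p) {L b r : ℕ} (hb : b < p) (hr : r < p ^ L)
    (a L' : ℕ) : digit p L' (a * p ^ (L + 1) + b * p ^ L + r)
      = if L' < L then digit p L' r else if L' = L then b else digit p (L' - L - 1) a := by
  have hpos : (0:ℕ) < p := by omega
  have hx : a * p ^ (L + 1) + b * p ^ L + r = r + (b + a * p) * p ^ L := by ring
  split
  · rename_i h
    rw [hx, digit_high hp (show L' + 1 ≤ L by omega)]
  · split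
    · rename_i h1 h2
      rw [hx, h2]
      unfold digit
      rw [Nat.add_mul_div_right _ _ (pow_pos hpos L), Nat.div_eq_of_lt hr, zero_add,
        Nat.add_mul_mod_self_right, Nat.mod_eq_of_lt hb]
    · rename_i h1 h2
      have hL' : L + 1 ≤ L' := by omega
      have hdiv : (a * p ^ (L + 1) + b * p ^ L + r) / p ^ (L + 1) = a := by
        have hlt : b * p ^ L + r < p ^ (L + 1) := by
          calc b * p ^ L + r < b * p ^ L + p ^ L := by omega
            _ = (b + 1) * p ^ L := by ring
            _ ≤ p * p ^ L := Nat.mul_le_mul_right _ (by omega)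
            _ = p ^ (L + 1) := (pow_succ' p L).symm
        have : a * p ^ (L + 1) + b * p ^ L + r = (b * p ^ L + r) + a * p ^ (L + 1) := by ring
        rw [this, Nat.add_mul_div_right _ _ (pow_pos hpos (L + 1)), Nat.div_eq_of_lt hlt,
          zero_add]
      unfold digit
      rw [show p ^ L' = p ^ (L + 1) * p ^ (L' - L - 1) by rw [← pow_add]; congr 1; omega,
        ← Nat.div_div_eq_div_mul, hdiv]

lemma eq_of_digits_eq {p : ℕ} {v g K : ℕ} (hv : v < p ^ K) (hg : g < p ^ K)
    (h : ∀ L, digit p L v = digit p L g) : v = g := by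
  have h1 : v % p ^ K = g % p ^ K := by
    rw [mod_pow_sum, mod_pow_sum]
    exact Finset.sum_congr rfl (fun L _ => by rw [h L])
  rwa [Nat.mod_eq_of_lt hv, Nat.mod_eq_of_lt hg] at h1

lemma digit_div_high {p : ℕ} (x L L' : ℕ) (h : L + 1 ≤ L') :
    digit p L' x = digit p (L' - L - 1) (x / p ^ (L + 1)) := by
  unfold digit
  rw [Nat.div_div_eq_div_mul, ← pow_add, show L + 1 + (L' - L - 1) = L' from by omega]

lemma exists_top_digit {p : ℕ} (hp : 1 < p) {v g : ℕ} (h : v < g) :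
    ∃ L, digit p L v < digit p L g ∧ ∀ L', L < L' → digit p L' v = digit p L' g := by
  have hgK : g < p ^ g := Nat.lt_pow_self hp
  have hvK : v < p ^ g := lt_trans h hgK
  set D := (Finset.range g).filter (fun L => digit p L v ≠ digit p L g) with hD
  have hDne : D.Nonempty := by
    by_contra hne
    rw [Finset.not_nonempty_iff_eq_empty] at hne
    have : ∀ L, digit p L v = digit p L g := by
      intro L
      rcases Nat.lt_or_ge L g with hL | hL
      · by_contra hne2
        exact absurd hne (Finset.ne_empty_of_mem (Finset.mem_filter.2 ⟨Finset.mem_range.2 hL, hne2⟩))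
      · rw [digit_eq_zero (lt_of_lt_of_le hvK (Nat.pow_le_pow_right (by omega) hL)),
          digit_eq_zero (lt_of_lt_of_le hgK (Nat.pow_le_pow_right (by omega) hL))]
    exact absurd (eq_of_digits_eq hvK hgK this) (by omega)
  obtain ⟨L, hLmem, hLmax⟩ := Finset.exists_max_image D id hDne
  rw [hD, Finset.mem_filter, Finset.mem_range] at hLmem
  have hhigh : ∀ L', L < L' → digit p L' v = digit p L' g := by
    intro L' hL'
    rcases Nat.lt_or_ge L' g with hL2 | hL2
    · by_contra hne2
      have := hLmax L' (Finset.mem_filter.2 ⟨Finset.mem_range.2 hL2, hne2⟩)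
      simp only [id] at this
      omega
    · rw [digit_eq_zero (lt_of_lt_of_le hvK (Nat.pow_le_pow_right (by omega) hL2)),
        digit_eq_zero (lt_of_lt_of_le hgK (Nat.pow_le_pow_right (by omega) hL2))]
  refine ⟨L, ?_, hhigh⟩
  -- show digit p L v < digit p L g
  have hdiveq : v / p ^ (L + 1) = g / p ^ (L + 1) := by
    apply eq_of_digits_eq (K := g) (Nat.lt_of_le_of_lt (Nat.div_le_self _ _) hvK)
      (Nat.lt_of_le_of_lt (Nat.div_le_self _ _) hgK)
    intro t
    have h1 := digit_div_high (p := p) v L (t + L + 1) (by omega)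
    have h2 := digit_div_high (p := p) g L (t + L + 1) (by omega)
    have h3 := hhigh (t + L + 1) (by omega)
    rw [show t + L + 1 - L - 1 = t by omega] at h1 h2
    omega
  by_contra hge
  have hne := hLmem.2
  have hgt : digit p L g < digit p L v := by omega
  have hv' := decomp (p := p) v L
  have hg' := decomp (p := p) g L
  have hrg : g % p ^ L < p ^ L := Nat.mod_lt _ (pow_pos (by omega) L)
  rw [hdiveq] at hv'
  have key : digit p L g * p ^ L + p ^ L ≤ digit p L v * p ^ L := by
    calc digit p L g * p ^ L + p ^ L = (digit p L g + 1) * p ^ L := by ring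
      _ ≤ digit p L v * p ^ L := Nat.mul_le_mul_right _ (by omega)
  have hj : 0 ≤ v % p ^ L := Nat.zero_le _
  linarith [hv', hg', key, hrg, h, hj]

/-- `p`-adic order of a natural number, with `ord 0 = ∞`. -/
noncomputable def ordE (p x : ℕ) : ℕ∞ := if x = 0 then ⊤ else (padicValNat p x : ℕ∞)

lemma exists_le_sum {m : ℕ} (f : Fin m → ℕ) (s : ℕ) (hs : s ≤ ∑ i, f i) :
    ∃ c : Fin m → ℕ, (∀ i, c i ≤ f i) ∧ ∑ i, c i = s := by
  induction s with
  | zero => exact ⟨0, fun i => Nat.zero_le _, by simp⟩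
  | succ s ih =>
    obtain ⟨c, hc, hsum⟩ := ih (by omega)
    have hex : ∃ i, c i < f i := by
      by_contra hno
      push_neg at hno
      have : ∑ i, f i ≤ ∑ i, c i := Finset.sum_le_sum (fun i _ => hno i)
      omega
    obtain ⟨i0, hi0⟩ := hex
    refine ⟨Function.update c i0 (c i0 + 1), ?_, ?_⟩
    · intro i
      by_cases h : i = i0
      · subst h; simp [Function.update_self]; omega
      · simp [Function.update_of_ne h]; exact hc i
    · rw [Finset.sum_update_of_mem (Finset.mem_univ i0)]
      have h2 : ∑ i, c i = c i0 + ∑ i ∈ Finset.univ.erase i0, c i :=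
        (Finset.add_sum_erase _ _ (Finset.mem_univ _)).symm
      rw [Finset.sdiff_singleton_eq_erase]
      omega

lemma lemA {p m : ℕ} (hp : 1 < p) (X Y : Fin m → ℕ) (hle : ∀ i, Y i ≤ X i)
    (hne : ∃ i, X i ≠ Y i)
    (hord : ordE p (∑ i, (X i - Y i)) = ⨅ i, ordE p (X i - Y i)) :
    oplusSum p Finset.univ Y ≠ oplusSum p Finset.univ X := by
  intro hG
  set d : Fin m → ℕ := fun i => X i - Y i with hd
  obtain ⟨i1, hi1⟩ := hne
  have hdi1 : 0 < d i1 := by simp only [hd]; have := hle i1; omega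
  have hS : 0 < ∑ i, d i := lt_of_lt_of_le hdi1 (le_sum_univ d i1)
  set S := ∑ i, d i with hSdef
  set L := padicValNat p S with hL
  have hordS : ordE p S = (L : ℕ∞) := by rw [ordE, if_neg (by omega)]
  have hinf : (⨅ i, ordE p (d i)) = (L : ℕ∞) := by rw [← hord]; exact hordS
  have hdvd : ∀ i, p ^ L ∣ d i := by
    intro i
    rcases Nat.eq_zero_or_pos (d i) with h0 | h0
    · simp [h0]
    · have h1 : (L : ℕ∞) ≤ ordE p (d i) := by
        rw [← hinf]; exact iInf_le _ i
      rw [ordE, if_neg (by omega)] at h1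
      have h2 : L ≤ padicValNat p (d i) := by exact_mod_cast h1
      exact dvd_trans (pow_dvd_pow p h2) pow_padicValNat_dvd
  have hnd : ¬ p ^ (L + 1) ∣ S := by
    intro hdvd2
    have := val_le_of_dvd hp (by omega) hdvd2
    omega
  have hXi : ∀ i, digit p L (X i) = (digit p L (Y i) + d i / p ^ L) % p := by
    intro i
    have hXY : X i = Y i + d i := by simp only [hd]; have := hle i; omega
    obtain ⟨e, he⟩ := hdvd i
    unfold digit
    rw [hXY, he, Nat.add_mul_div_left _ _ (pow_pos (by omega : 0 < p) L),
      Nat.mul_div_cancel_left _ (pow_pos (by omega : 0 < p) L), Nat.mod_add_mod]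
  have hsum : (∑ i, digit p L (X i)) % p
      = ((∑ i, digit p L (Y i)) + ∑ i, d i / p ^ L) % p := by
    have e1 : (∑ i, digit p L (X i)) = ∑ i, (digit p L (Y i) + d i / p ^ L) % p :=
      Finset.sum_congr rfl (fun i _ => hXi i)
    rw [e1, ← Finset.sum_nat_mod, ← Finset.sum_add_distrib]
  have hGL : (∑ i, digit p L (Y i)) % p = (∑ i, digit p L (X i)) % p := by
    rw [← oplus_digit hp Y L, ← oplus_digit hp X L, hG]
  have hdvd3 : p ∣ ∑ i, d i / p ^ L := by
    have h1 : ((∑ i, digit p L (Y i)) + ∑ i, d i / p ^ L) % p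
        = (∑ i, digit p L (Y i)) % p := by omega
    have h2 : (∑ i, digit p L (Y i)) ≡ (∑ i, digit p L (Y i)) + ∑ i, d i / p ^ L [MOD p] :=
      h1.symm
    have h3 := (Nat.modEq_iff_dvd' (Nat.le_add_right _ _)).mp h2
    simpa using h3
  obtain ⟨c, hc⟩ := hdvd3
  apply hnd
  have he_sum : (∑ i, d i / p ^ L) * p ^ L = S := by
    rw [Finset.sum_mul]
    exact Finset.sum_congr rfl (fun i _ => Nat.div_mul_cancel (hdvd i))
  rw [← he_sum, hc, pow_succ]
  exact ⟨c, by ring⟩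

lemma digit_sub {p : ℕ} (hp : 1 < p) (x cc L : ℕ) (hc : cc ≤ digit p L x) (L'' : ℕ) :
    digit p L'' (x - cc * p ^ L) = if L'' = L then digit p L x - cc else digit p L'' x := by
  have hdx := decomp (p := p) x L
  have hr : x % p ^ L < p ^ L := Nat.mod_lt _ (pow_pos (by omega) L)
  have hsub : x - cc * p ^ L
      = x / p ^ (L + 1) * p ^ (L + 1) + (digit p L x - cc) * p ^ L + x % p ^ L := by
    have e2 : cc * p ^ L ≤ digit p L x * p ^ L := Nat.mul_le_mul_right _ hc
    rw [Nat.sub_mul]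
    set DP := digit p L x * p ^ L
    set CP := cc * p ^ L
    set A := x / p ^ (L + 1) * p ^ (L + 1)
    set R := x % p ^ L
    clear_value DP CP A R
    omega
  have hD := digit_decompose hp (show digit p L x - cc < p by have := digit_lt hp L x; omega)
    hr (x / p ^ (L + 1)) L''
  have hx'' : digit p L'' x = if L'' < L then digit p L'' (x % p ^ L)
      else if L'' = L then digit p L x else digit p (L'' - L - 1) (x / p ^ (L + 1)) := by
    conv_lhs => rw [hdx]
    rw [digit_decompose hp (digit_lt hp L x) hr (x / p ^ (L + 1)) L'']
  rw [hsub, hD]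
  rcases lt_trichotomy L'' L with h | h | h
  · rw [if_pos h, if_neg (show L'' ≠ L by omega), hx'', if_pos h]
  · rw [if_neg (show ¬ L'' < L by omega), if_pos h, if_pos h]
  · rw [if_neg (show ¬ L'' < L by omega), if_neg (show L'' ≠ L by omega),
      if_neg (show L'' ≠ L by omega), hx'', if_neg (show ¬ L'' < L by omega),
      if_neg (show L'' ≠ L by omega)]

/-- Legal move in Nim with `m` coins and `p`-index `k`. -/
def NimMove (p k : ℕ) {m : ℕ} (X Y : Fin m → ℕ) : Prop :=
  (∀ i, Y i ≤ X i) ∧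
    0 < (Finset.univ.filter fun i => X i ≠ Y i).card ∧
    (Finset.univ.filter fun i => X i ≠ Y i).card < k ∧
    ordE p (∑ i, (X i - Y i)) = ⨅ i, ordE p (X i - Y i)

lemma val_mul_pow {p : ℕ} (hp : 1 < p) {cc : ℕ} (h1 : 0 < cc) (h2 : cc < p) (L : ℕ) :
    padicValNat p (cc * p ^ L) = L := by
  have hpL : 0 < p ^ L := pow_pos (by omega) L
  apply val_eq hp (by positivity) (dvd_mul_left _ _)
  rintro ⟨q, hq⟩
  have h2' : cc * p ^ L = p * q * p ^ L := by rw [hq, pow_succ]; ring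
  have hcc : cc = p * q := Nat.eq_of_mul_eq_mul_right hpL h2'
  rcases Nat.eq_zero_or_pos q with h | h
  · subst h; simp at hcc; omega
  · have : p ≤ p * q := Nat.le_mul_of_pos_right p h
    omega

lemma ordE_mul_pow {p : ℕ} (hp : 1 < p) {cc : ℕ} (h1 : 0 < cc) (h2 : cc < p) (L : ℕ) :
    ordE p (cc * p ^ L) = (L : ℕ∞) := by
  have hpL : 0 < p ^ L := pow_pos (by omega) L
  rw [ordE, if_neg (by positivity), val_mul_pow hp h1 h2]

lemma lemB {p m j : ℕ} (hp : 1 < p) (hj : min p (m + 1) ≤ j) (X : Fin m → ℕ) (v : ℕ)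
    (hv : v < oplusSum p Finset.univ X) :
    ∃ Y : Fin m → ℕ, NimMove p j X Y ∧ oplusSum p Finset.univ Y = v := by
  have hp0 : (0:ℕ) < p := by omega
  set g := oplusSum p Finset.univ X with hg
  obtain ⟨L, hLlt, hLhigh⟩ := exists_top_digit hp hv
  have hgd : ∀ L', digit p L' g = (∑ i, digit p L' (X i)) % p := fun L' => oplus_digit hp X L'
  set dv := digit p L v with hdv
  set dg := digit p L g with hdgdef
  have hdvp : dv < p := digit_lt hp L v
  have hdgp : dg < p := digit_lt hp L g
  set s := dg - dv with hs
  have hs1 : 1 ≤ s := by omega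
  have hsp : s ≤ p - 1 := by omega
  have hsle : s ≤ ∑ i, digit p L (X i) := by
    have h1 := hgd L
    have h2 : (∑ i, digit p L (X i)) % p ≤ ∑ i, digit p L (X i) := Nat.mod_le _ _
    omega
  obtain ⟨c, hcle, hcsum⟩ := exists_le_sum _ s hsle
  set T := Finset.univ.filter (fun i => 0 < c i) with hT
  have hTcard : T.card ≤ s := by
    calc T.card = ∑ _i ∈ T, 1 := by rw [Finset.card_eq_sum_ones]
      _ ≤ ∑ i ∈ T, c i := Finset.sum_le_sum (fun i hi => (Finset.mem_filter.1 hi).2)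
      _ ≤ ∑ i, c i := Finset.sum_le_sum_of_subset (Finset.filter_subset _ _)
      _ = s := hcsum
  have hTne : T.Nonempty := by
    by_contra hno
    rw [Finset.not_nonempty_iff_eq_empty] at hno
    have hz : ∀ i, c i = 0 := by
      intro i
      by_contra hzz
      exact absurd hno (Finset.ne_empty_of_mem
        (Finset.mem_filter.2 ⟨Finset.mem_univ i, by omega⟩))
    rw [Finset.sum_congr rfl (fun i _ => hz i)] at hcsum
    simp at hcsum
    omega
  obtain ⟨i0, hi0T⟩ := hTne
  have hci0 : 0 < c i0 := (Finset.mem_filter.1 hi0T).2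
  set t : ℕ → ℕ := fun L' =>
    (digit p L' v + (p - (∑ i ∈ Finset.univ.erase i0, digit p L' (X i)) % p)) % p with ht
  have htlt : ∀ L', t L' < p := fun L' => Nat.mod_lt _ hp0
  set w := ∑ L' ∈ Finset.range L, t L' * p ^ L' with hw
  have hwlt : w < p ^ L := sum_digits_lt hp t htlt L
  have hwd : ∀ L', digit p L' w = if L' < L then t L' else 0 :=
    fun L' => digit_of_sum hp t htlt L L'
  set D0 := digit p L (X i0) with hD0
  have hcD0 : c i0 ≤ D0 := hcle i0
  have hD0p : D0 < p := digit_lt hp L (X i0)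
  set Y : Fin m → ℕ := fun i => if i = i0 then
      X i0 / p ^ (L + 1) * p ^ (L + 1) + (D0 - c i0) * p ^ L + w
    else X i - c i * p ^ L with hY
  have hYi0 : Y i0 = X i0 / p ^ (L + 1) * p ^ (L + 1) + (D0 - c i0) * p ^ L + w := by
    simp only [hY, if_pos rfl]
  have hYne : ∀ i, i ≠ i0 → Y i = X i - c i * p ^ L := fun i h => by
    simp only [hY, if_neg h]
  have hdigY0 : ∀ L', digit p L' (Y i0)
      = if L' < L then t L' else if L' = L then D0 - c i0 else digit p L' (X i0) := by
    intro L'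
    rw [hYi0, digit_decompose hp (show D0 - c i0 < p by omega) hwlt _ L']
    rcases lt_trichotomy L' L with h | h | h
    · rw [if_pos h, if_pos h, hwd L', if_pos h]
    · rw [if_neg (show ¬ L' < L by omega), if_pos h, if_neg (show ¬ L' < L by omega),
        if_pos h]
    · rw [if_neg (show ¬ L' < L by omega), if_neg (show L' ≠ L by omega),
        if_neg (show ¬ L' < L by omega), if_neg (show L' ≠ L by omega),
        ← digit_div_high _ _ _ (show L + 1 ≤ L' by omega)]
  have hdigYne : ∀ i, i ≠ i0 → ∀ L', digit p L' (Y i)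
      = if L' = L then digit p L (X i) - c i else digit p L' (X i) := by
    intro i h L'
    rw [hYne i h, digit_sub hp _ _ _ (hcle i) L']
  have hXlow : ∀ i : Fin m, digit p L (X i) * p ^ L ≤ X i := by
    intro i
    conv_rhs => rw [decomp (p := p) (X i) L]
    exact le_trans (Nat.le_add_left _ _) (Nat.le_add_right _ _)
  have hlt0 : Y i0 < X i0 := by
    have hd0 := decomp (p := p) (X i0) L
    rw [hYi0]
    have e1 : (D0 - c i0 + 1) * p ^ L ≤ D0 * p ^ L :=
      Nat.mul_le_mul_right _ (by omega)
    have e2 : (D0 - c i0 + 1) * p ^ L = (D0 - c i0) * p ^ L + p ^ L := by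
      rw [add_mul, one_mul]
    set A := X i0 / p ^ (L + 1) * p ^ (L + 1)
    set G1 := (D0 - c i0) * p ^ L
    set G2 := (D0 - c i0 + 1) * p ^ L
    set DP := D0 * p ^ L
    set R0' := X i0 % p ^ L
    clear_value A G1 G2 DP R0'
    omega
  have hle2 : ∀ i, Y i ≤ X i := by
    intro i
    by_cases h : i = i0
    · subst h; exact le_of_lt hlt0
    · rw [hYne i h]; exact Nat.sub_le _ _
  have hclepL : ∀ i, c i * p ^ L ≤ X i := fun i =>
    le_trans (Nat.mul_le_mul_right _ (hcle i)) (hXlow i)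
  have hchg : Finset.univ.filter (fun i => X i ≠ Y i) = T := by
    ext i
    simp only [Finset.mem_filter, Finset.mem_univ, true_and, hT]
    constructor
    · intro hne
      by_contra hc0
      have hci : c i = 0 := by omega
      have hii : i ≠ i0 := fun h => by rw [h] at hci; omega
      rw [hYne i hii, hci, zero_mul, Nat.sub_zero] at hne
      exact hne rfl
    · intro hci
      by_cases h : i = i0
      · subst h; intro he; omega
      · rw [hYne i h]
        have h1 : 0 < c i * p ^ L := Nat.mul_pos hci (pow_pos hp0 L)
        have h2 := hclepL i
        omega
  have hcard1 : 0 < (Finset.univ.filter fun i => X i ≠ Y i).card := by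
    rw [hchg]; exact Finset.card_pos.2 ⟨i0, hi0T⟩
  have hcard2 : (Finset.univ.filter fun i => X i ≠ Y i).card < j := by
    rw [hchg]
    have h2 : T.card ≤ m := le_trans (Finset.card_le_univ T) (by simp)
    omega
  -- digit sums of Y
  have hsums : ∀ L', (∑ i, digit p L' (Y i)) % p = digit p L' v := by
    intro L'
    rcases lt_trichotomy L' L with h | h | h
    · have hsplit : ∑ i, digit p L' (Y i)
          = digit p L' (Y i0) + ∑ i ∈ Finset.univ.erase i0, digit p L' (Y i) :=
        (Finset.add_sum_erase _ _ (Finset.mem_univ i0)).symm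
      have herase : ∑ i ∈ Finset.univ.erase i0, digit p L' (Y i)
          = ∑ i ∈ Finset.univ.erase i0, digit p L' (X i) :=
        Finset.sum_congr rfl (fun i hi => by
          rw [hdigYne i (Finset.ne_of_mem_erase hi) L', if_neg (show L' ≠ L by omega)])
      rw [hsplit, herase, hdigY0 L', if_pos h]
      simp only [ht]
      set A' := ∑ i ∈ Finset.univ.erase i0, digit p L' (X i) with hA'
      have hA'p : A' % p < p := Nat.mod_lt _ hp0
      rw [Nat.mod_add_mod]
      have hdm := Nat.div_add_mod A' p
      have e : p * (A' / p + 1) = p * (A' / p) + p := by ring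
      have heq : digit p L' v + (p - A' % p) + A' = digit p L' v + p * (A' / p + 1) := by
        omega
      rw [heq, Nat.add_mul_mod_self_left, Nat.mod_eq_of_lt (digit_lt hp L' v)]
    · subst h
      have hper : ∀ i, digit p L' (Y i) = digit p L' (X i) - c i := by
        intro i
        by_cases hii : i = i0
        · rw [hii, hdigY0 L', if_neg (lt_irrefl L'), if_pos rfl]
        · rw [hdigYne i hii L', if_pos rfl]
      rw [Finset.sum_congr rfl (fun i _ => hper i)]
      have hsub2 : ∑ i, (digit p L' (X i) - c i) + s = ∑ i, digit p L' (X i) := by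
        rw [← hcsum, ← Finset.sum_add_distrib]
        exact Finset.sum_congr rfl (fun i _ => Nat.sub_add_cancel (hcle i))
      have hgdL := hgd L'
      set S' := ∑ i, digit p L' (X i) with hS'
      have hdm := Nat.div_add_mod S' p
      have e : p * (S' / p) + dv = p * (S' / p) + dv := rfl
      have heq : ∑ i, (digit p L' (X i) - c i) = p * (S' / p) + dv := by omega
      rw [heq, Nat.mul_add_mod, Nat.mod_eq_of_lt hdvp]
    · have hper : ∀ i, digit p L' (Y i) = digit p L' (X i) := by
        intro i
        by_cases hii : i = i0
        · rw [hii, hdigY0 L', if_neg (show ¬ L' < L by omega),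
            if_neg (show L' ≠ L by omega)]
        · rw [hdigYne i hii L', if_neg (show L' ≠ L by omega)]
      rw [Finset.sum_congr rfl (fun i _ => hper i), ← hgd L']
      exact (hLhigh L' h).symm
  have hoplusY : oplusSum p Finset.univ Y = v := oplus_eq_of_digits hp Y v hsums
  -- the ord condition
  set R0 := X i0 % p ^ L with hR0
  have hR0lt : R0 < p ^ L := Nat.mod_lt _ (pow_pos hp0 L)
  have hdecomp0 : X i0 = X i0 / p ^ (L + 1) * p ^ (L + 1) + D0 * p ^ L + R0 :=
    decomp _ _
  have hdi0 : X i0 - Y i0 = c i0 * p ^ L + R0 - w := by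
    rw [hYi0]
    have e1 : (D0 - c i0) * p ^ L = D0 * p ^ L - c i0 * p ^ L := Nat.sub_mul _ _ _
    have e2 : c i0 * p ^ L ≤ D0 * p ^ L := Nat.mul_le_mul_right _ hcD0
    set A := X i0 / p ^ (L + 1) * p ^ (L + 1)
    set G1 := (D0 - c i0) * p ^ L
    set DP := D0 * p ^ L
    set CP := c i0 * p ^ L
    clear_value A G1 DP CP
    omega
  have hdne : ∀ i, i ≠ i0 → X i - Y i = c i * p ^ L := by
    intro i h
    rw [hYne i h]
    have := hclepL i
    omega
  set u := c i0 * p ^ L + R0 - w with hu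
  have hcppos : p ^ L ≤ c i0 * p ^ L := Nat.le_mul_of_pos_left _ hci0
  have hupos : 0 < u := by omega
  have hsd : ∑ i, (X i - Y i) = (s - c i0) * p ^ L + u := by
    have h1 : ∑ i, (X i - Y i)
        = (X i0 - Y i0) + ∑ i ∈ Finset.univ.erase i0, (X i - Y i) :=
      (Finset.add_sum_erase _ _ (Finset.mem_univ i0)).symm
    have h2 : ∑ i ∈ Finset.univ.erase i0, (X i - Y i)
        = (∑ i ∈ Finset.univ.erase i0, c i) * p ^ L := by
      rw [Finset.sum_mul]
      exact Finset.sum_congr rfl (fun i hi => hdne i (Finset.ne_of_mem_erase hi))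
    have h3 : c i0 + ∑ i ∈ Finset.univ.erase i0, c i = s := by
      rw [← hcsum]; exact Finset.add_sum_erase _ _ (Finset.mem_univ i0)
    have h4 : ∑ i ∈ Finset.univ.erase i0, c i = s - c i0 := by omega
    rw [h1, h2, hdi0, h4]
    exact Nat.add_comm _ _
  have hci0p : c i0 < p := by omega
  have hpord : ordE p (∑ i, (X i - Y i)) = ⨅ i, ordE p (X i - Y i) := by
    by_cases hrw : R0 = w
    · -- no borrow interaction
      have hci0s : c i0 ≤ s := by rw [← hcsum]; exact le_sum_univ c i0
      have hueq : u = c i0 * p ^ L := by omega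
      have hsum' : ∑ i, (X i - Y i) = s * p ^ L := by
        rw [hsd, hueq, ← add_mul]
        congr 1
        omega
      have hinf : ⨅ i, ordE p (X i - Y i) = (L : ℕ∞) := by
        apply le_antisymm
        · exact iInf_le_of_le i0 (le_of_eq
            (show ordE p (X i0 - Y i0) = (L:ℕ∞) by
              rw [hdi0, hueq, ordE_mul_pow hp hci0 hci0p]))
        · apply le_iInf
          intro i
          by_cases h : i = i0
          · rw [h, hdi0, hueq, ordE_mul_pow hp hci0 hci0p]
          · rw [hdne i h]
            rcases Nat.eq_zero_or_pos (c i) with h0 | h0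
            · rw [h0, zero_mul, ordE, if_pos rfl]; exact le_top
            · rw [ordE_mul_pow hp h0 (by have := hcle i; have := digit_lt hp L (X i); omega)]
      rw [hsum', hinf, ordE_mul_pow hp (by omega) (by omega)]
    · -- borrow: valuation drops below L
      have hndvd : ¬ p ^ L ∣ u := by
        rintro ⟨q, hq⟩
        rw [mul_comm] at hq
        have heq : w + q * p ^ L = c i0 * p ^ L + R0 := by omega
        have h1 : (w + q * p ^ L) % p ^ L = w := by
          rw [Nat.add_mul_mod_self_right, Nat.mod_eq_of_lt hwlt]
        have h2 : (c i0 * p ^ L + R0) % p ^ L = R0 := by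
          rw [add_comm, Nat.add_mul_mod_self_right, Nat.mod_eq_of_lt hR0lt]
        rw [heq, h2] at h1
        exact hrw h1
      have hu0 : u ≠ 0 := by omega
      set t0 := padicValNat p u with ht0
      have ht0dvd : p ^ t0 ∣ u := pow_padicValNat_dvd
      have ht0L : t0 < L := by
        by_contra hcon
        exact hndvd (dvd_trans (pow_dvd_pow p (by omega)) ht0dvd)
      have ht0n : ¬ p ^ (t0 + 1) ∣ u := fun hdd => by
        have := val_le_of_dvd hp hu0 hdd; omega
      have hordu : ordE p u = (t0 : ℕ∞) := by rw [ordE, if_neg hu0]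
      have hSdvd : p ^ t0 ∣ (s - c i0) * p ^ L + u :=
        dvd_add (Dvd.dvd.mul_left (pow_dvd_pow p (le_of_lt ht0L)) _) ht0dvd
      have hSn : ¬ p ^ (t0 + 1) ∣ (s - c i0) * p ^ L + u := by
        intro hdd
        apply ht0n
        have h1 : p ^ (t0 + 1) ∣ (s - c i0) * p ^ L :=
          Dvd.dvd.mul_left (pow_dvd_pow p (by omega)) _
        have h2 := Nat.dvd_sub hdd h1
        rwa [Nat.add_sub_cancel_left] at h2
      have hordS : ordE p ((s - c i0) * p ^ L + u) = (t0 : ℕ∞) := by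
        rw [ordE, if_neg (by omega), val_eq hp (by omega) hSdvd hSn]
      have hinf : ⨅ i, ordE p (X i - Y i) = (t0 : ℕ∞) := by
        apply le_antisymm
        · exact iInf_le_of_le i0 (le_of_eq
            (show ordE p (X i0 - Y i0) = (t0:ℕ∞) by rw [hdi0, hordu]))
        · apply le_iInf
          intro i
          by_cases h : i = i0
          · rw [h, hdi0, hordu]
          · rw [hdne i h]
            rcases Nat.eq_zero_or_pos (c i) with h0 | h0
            · rw [h0, zero_mul, ordE, if_pos rfl]; exact le_top
            · rw [ordE_mul_pow hp h0 (by have := hcle i; have := digit_lt hp L (X i); omega)]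
              exact_mod_cast ht0L.le
      rw [hsd, hordS, hinf]
  exact ⟨Y, ⟨hle2, hcard1, hcard2, hpord⟩, hoplusY⟩

/-- Sprague-Grundy value computed with fuel bounding the total number of tokens. -/
noncomputable def sgAux (p k m : ℕ) : ℕ → (Fin m → ℕ) → ℕ
  | 0, _ => 0
  | n + 1, X => sInf {v : ℕ | ∀ Y : Fin m → ℕ, NimMove p k X Y → sgAux p k m n Y ≠ v}

/-- The Sprague-Grundy function of `N^m_{p,k}`. -/
noncomputable def nimSg (p k : ℕ) {m : ℕ} (X : Fin m → ℕ) : ℕ :=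
  sgAux p k m (∑ i, X i + 1) X

lemma move_sum_lt {p k m : ℕ} {X Y : Fin m → ℕ} (h : NimMove p k X Y) :
    ∑ i, Y i < ∑ i, X i := by
  obtain ⟨hle, hpos, -, -⟩ := h
  obtain ⟨i1, hi1⟩ := Finset.card_pos.1 hpos
  rw [Finset.mem_filter] at hi1
  exact Finset.sum_lt_sum (fun i _ => hle i)
    ⟨i1, Finset.mem_univ i1, lt_of_le_of_ne (hle i1) (fun h => hi1.2 h.symm)⟩

lemma sgAux_eq_nimSg (p k m : ℕ) : ∀ n (X : Fin m → ℕ), ∑ i, X i < n →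
    sgAux p k m n X = nimSg p k X := by
  intro n
  induction n using Nat.strong_induction_on with
  | _ n ih =>
    intro X hX
    obtain ⟨n', rfl⟩ : ∃ n'', n = n'' + 1 := ⟨n - 1, by omega⟩
    have hkey : ∀ Y, NimMove p k X Y →
        sgAux p k m n' Y = sgAux p k m (∑ i, X i) Y := by
      intro Y hm
      have h1 := move_sum_lt hm
      rw [ih n' (by omega) Y (by omega), ih (∑ i, X i) (by omega) Y h1]
    rw [nimSg]
    simp only [sgAux]
    congr 1
    ext v
    simp only [Set.mem_setOf_eq]
    exact ⟨fun h Y hm => by rw [← hkey Y hm]; exact h Y hm,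
      fun h Y hm => by rw [hkey Y hm]; exact h Y hm⟩

lemma sg_eq_oplus {p m j : ℕ} (hp : 1 < p) (hj : min p (m + 1) ≤ j) :
    ∀ X : Fin m → ℕ, nimSg p j X = oplusSum p Finset.univ X := by
  suffices h : ∀ N (X : Fin m → ℕ), ∑ i, X i ≤ N →
      nimSg p j X = oplusSum p Finset.univ X by
    intro X; exact h _ X le_rfl
  intro N
  induction N using Nat.strong_induction_on with
  | _ N ih =>
    intro X hX
    have hk : ∀ Y, NimMove p j X Y →
        sgAux p j m (∑ i, X i) Y = oplusSum p Finset.univ Y := by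
      intro Y hm
      have hlt := move_sum_lt hm
      rw [sgAux_eq_nimSg p j m _ Y hlt]
      rcases Nat.eq_zero_or_pos N with h0 | h0
      · omega
      · exact ih (N - 1) (by omega) Y (by omega)
    rw [nimSg]
    simp only [sgAux]
    apply IsLeast.csInf_eq
    constructor
    · intro Y hm
      rw [hk Y hm]
      obtain ⟨i1, hi1⟩ := Finset.card_pos.1 hm.2.1
      rw [Finset.mem_filter] at hi1
      exact lemA hp X Y hm.1 ⟨i1, hi1.2⟩ hm.2.2.2
    · intro v hv
      by_contra hlt
      push_neg at hlt
      obtain ⟨Y, hm, hY⟩ := lemB hp hj X v hlt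
      exact hv Y hm (by rw [hk Y hm]; exact hY)

lemma nimSg_zero {p m : ℕ} (Z : Fin m → ℕ) : nimSg p 0 Z = 0 := by
  rw [nimSg]
  simp only [sgAux]
  have h1 : (0:ℕ) ∈ {v : ℕ | ∀ Y : Fin m → ℕ, NimMove p 0 Z Y →
      sgAux p 0 m (∑ i, Z i) Y ≠ v} := by
    intro Y hm
    exact absurd hm.2.2.1 (by omega)
  exact Nat.le_zero.1 (Nat.sInf_le h1)

lemma filter_lt_card {m n : ℕ} (hn : n ≤ m) :
    (Finset.univ.filter (fun i : Fin m => (i : ℕ) < n)).card = n := by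
  have himg : (Finset.univ.filter (fun i : Fin m => (i : ℕ) < n)).image (Fin.val)
      = Finset.range n := by
    ext a
    simp only [Finset.mem_image, Finset.mem_filter, Finset.mem_univ, true_and,
      Finset.mem_range]
    constructor
    · rintro ⟨i, hi, rfl⟩; exact hi
    · intro ha; exact ⟨⟨a, by omega⟩, ha, rfl⟩
  have hinj := Finset.card_image_of_injective
    (Finset.univ.filter (fun i : Fin m => (i : ℕ) < n)) (Fin.val_injective)
  rw [himg, Finset.card_range] at hinj
  omega

lemma oplus_ne_zero_of_option {p m n : ℕ} (hp : 1 < p) (hn1 : 1 ≤ n) (hnp : n < p)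
    (hnm : n ≤ m) (W Y : Fin m → ℕ) (hW : W = fun i : Fin m => if (i : ℕ) < n then p else 0)
    (hle : ∀ i, Y i ≤ W i)
    (hcard : (Finset.univ.filter fun i => W i ≠ Y i).card < n) :
    oplusSum p Finset.univ Y ≠ 0 := by
  have hp0 : (0:ℕ) < p := by omega
  set C := Finset.univ.filter (fun i => W i ≠ Y i) with hC
  have hCsub : C ⊆ Finset.univ.filter (fun i : Fin m => (i : ℕ) < n) := by
    intro i hi
    rw [hC, Finset.mem_filter] at hi
    rw [Finset.mem_filter]
    refine ⟨Finset.mem_univ _, ?_⟩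
    by_contra h
    have hWi : W i = 0 := by rw [hW]; simp [h]
    have := hle i
    exact hi.2 (by omega)
  have hdig : ∀ i : Fin m, digit p 1 (Y i) = if (i : ℕ) < n ∧ i ∉ C then 1 else 0 := by
    intro i
    by_cases h1 : (i : ℕ) < n
    · have hWi : W i = p := by rw [hW]; simp [h1]
      by_cases h2 : i ∈ C
      · have hlt : Y i < p := by
          rw [hC, Finset.mem_filter] at h2
          have := hle i
          omega
        rw [if_neg (by tauto)]
        exact digit_eq_zero (by rw [pow_one]; exact hlt)
      · have hYi : Y i = p := by
          rw [hC, Finset.mem_filter] at h2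
          push_neg at h2
          have := h2 (Finset.mem_univ i)
          omega
        rw [if_pos ⟨h1, h2⟩, hYi]
        unfold digit
        rw [pow_one, Nat.div_self hp0, Nat.mod_eq_of_lt hp]
    · have hWi : W i = 0 := by rw [hW]; simp [h1]
      have hY0 : Y i = 0 := by have := hle i; omega
      rw [if_neg (by tauto), hY0]
      exact digit_eq_zero (pow_pos hp0 1)
  have hCcard : C.card < n := hcard
  have hsum : ∑ i, digit p 1 (Y i) = n - C.card := by
    rw [Finset.sum_congr rfl (fun i _ => hdig i), Finset.sum_ite, Finset.sum_const,
      Finset.sum_const_zero, add_zero, smul_eq_mul, mul_one]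
    have hfe : Finset.univ.filter (fun i : Fin m => (i : ℕ) < n ∧ i ∉ C)
        = (Finset.univ.filter (fun i : Fin m => (i : ℕ) < n)) \ C := by
      ext i
      simp only [Finset.mem_filter, Finset.mem_univ, true_and, Finset.mem_sdiff]
    rw [hfe, Finset.card_sdiff_of_subset hCsub, filter_lt_card hnm]
  intro h0
  have hd1 := oplus_digit hp Y 1
  rw [h0, hsum] at hd1
  have hdz : digit p 1 0 = 0 := digit_eq_zero (pow_pos hp0 1)
  rw [hdz] at hd1
  rw [Nat.mod_eq_of_lt (by omega)] at hd1
  omega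

theorem stmt4 (p m : ℕ) (hp : 1 < p) (hm : 1 ≤ m) (k : ℕ) (hk : k = min p (m + 1))
    (X : Fin m → ℕ) (hX : X = fun i : Fin m => if (i : ℕ) < k - 1 then p else 0) :
    (¬ ∃ Y : Fin m → ℕ, NimMove p (k - 1) X Y ∧ oplusSum p Finset.univ Y = 0) ∧
      IsLeast {j : ℕ | ∀ Z : Fin m → ℕ, nimSg p j Z = nimSg p (m + 1) Z} k := by
  have hk2 : 2 ≤ k := by omega
  have hkp : k ≤ p := by omega
  have hkm : k ≤ m + 1 := by omega
  constructor
  · rintro ⟨Y, hmv, h0⟩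
    exact oplus_ne_zero_of_option hp (n := k - 1) (by omega) (by omega) (by omega) X Y hX
      hmv.1 hmv.2.2.1 h0
  · constructor
    · intro Z
      rw [sg_eq_oplus hp (show min p (m + 1) ≤ k by omega) Z,
        sg_eq_oplus hp (show min p (m + 1) ≤ m + 1 by omega) Z]
    · intro j hj
      simp only [Set.mem_setOf_eq] at hj
      by_contra hjk
      push_neg at hjk
      have hemptyfilter : ∀ Z : Fin m → ℕ,
          (Finset.univ.filter (fun i : Fin m => Z i ≠ Z i)).card = 0 := by
        intro Z
        have he : Finset.univ.filter (fun i : Fin m => Z i ≠ Z i) = ∅ := by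
          apply Finset.filter_false_of_mem
          intro i _
          simp
        rw [he]
        simp
      rcases Nat.eq_zero_or_pos j with rfl | hj1
      · set Z : Fin m → ℕ := fun i : Fin m => if (i : ℕ) < 1 then p else 0 with hZ
        have h1 : nimSg p 0 Z = 0 := nimSg_zero Z
        have h2 : nimSg p (m + 1) Z = oplusSum p Finset.univ Z :=
          sg_eq_oplus hp (show min p (m + 1) ≤ m + 1 by omega) Z
        have h3 : oplusSum p Finset.univ Z ≠ 0 := by
          apply oplus_ne_zero_of_option hp (le_refl 1) (by omega) (by omega) Z Z hZ
            (fun i => le_rfl)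
          rw [hemptyfilter Z]
          omega
        rw [hj Z, h2] at h1
        exact h3 h1
      · set Z : Fin m → ℕ := fun i : Fin m => if (i : ℕ) < j then p else 0 with hZ
        have hZne : oplusSum p Finset.univ Z ≠ 0 := by
          apply oplus_ne_zero_of_option hp hj1 (by omega) (by omega) Z Z hZ (fun i => le_rfl)
          rw [hemptyfilter Z]
          omega
        have h2 : nimSg p (m + 1) Z = oplusSum p Finset.univ Z :=
          sg_eq_oplus hp (show min p (m + 1) ≤ m + 1 by omega) Z
        have h3 : nimSg p j Z ≠ 0 := by rw [hj Z, h2]; exact hZne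
        have h4 : (0 : ℕ) ∉ {v : ℕ | ∀ Y : Fin m → ℕ, NimMove p j Z Y →
            sgAux p j m (∑ i, Z i) Y ≠ v} := by
          intro h0mem
          apply h3
          rw [nimSg]
          simp only [sgAux]
          exact Nat.le_zero.1 (Nat.sInf_le h0mem)
        simp only [Set.mem_setOf_eq] at h4
        push_neg at h4
        obtain ⟨Y, hmv, hY0⟩ := h4
        have hYop : oplusSum p Finset.univ Y = 0 := by
          rw [← sg_eq_oplus hp (show min p (m + 1) ≤ m + 1 by omega) Y, ← hj Y,
            ← sgAux_eq_nimSg p j m _ Y (move_sum_lt hmv), hY0]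
        exact oplus_ne_zero_of_option hp hj1 (by omega) (by omega) Z Y hZ hmv.1
          hmv.2.2.1 hYop
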